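/- The deformed Bessel functions satisfy Σ_{n=−∞}^{∞} J_n^μ(x) = 1, equivalently J_0^μ(x) + 2 Σ_{n≥1} J_{2n}^μ(x) = 1, for all real x. -/

import Mathlib

open Nat Finset

set_option maxHeartbeats 2000000


/-- The deformed integer `[n]_μ = n + μ (1 - (-1)^n)`. -/
noncomputable def dIdx (μ : ℝ) (n : ℕ) : ℝ := n + μ * (1 - (-1 : ℝ) ^ n)

/-- The deformed factorial `[n]_μ!`. -/
noncomputable def dFact (μ : ℝ) : ℕ → ℝ
  | 0 => 1
  | n + 1 => dIdx μ (n + 1) * dFact μ n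

/-- The deformed Bessel function `J_n^μ` for `n ≥ 0`. -/
noncomputable def Jmu (μ : ℝ) (n : ℕ) (x : ℝ) : ℝ :=
  ∑' k : ℕ, (-1 : ℝ) ^ k * (Nat.factorial (2 * k + n)) /
      ((Nat.factorial k) * (Nat.factorial (k + n)) * dFact μ (2 * k + n)) *
    (x / 2) ^ (2 * k + n)

/-- `J_n^μ` for `n ∈ ℤ`, with `J_{-n}^μ = (-1)^n J_n^μ`. -/
noncomputable def JmuZ (μ : ℝ) (n : ℤ) (x : ℝ) : ℝ :=
  if 0 ≤ n then Jmu μ n.toNat x else (-1 : ℝ) ^ (-n).toNat * Jmu μ (-n).toNat x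

lemma dIdx_ge (μ : ℝ) (hμ : 0 ≤ μ) (n : ℕ) : (n : ℝ) ≤ dIdx μ n := by
  unfold dIdx
  have h : (0:ℝ) ≤ μ * (1 - (-1 : ℝ) ^ n) := by
    apply mul_nonneg hμ
    rcases Nat.even_or_odd n with h | h
    · rw [h.neg_one_pow]; norm_num
    · rw [h.neg_one_pow]; norm_num
  linarith

lemma dFact_pos (μ : ℝ) (hμ : 0 ≤ μ) : ∀ n, 0 < dFact μ n
  | 0 => by simp [dFact]
  | n + 1 => by
      have h1 : (0:ℝ) < dIdx μ (n+1) := by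
        have := dIdx_ge μ hμ (n+1)
        have : (0:ℝ) < ((n:ℝ) + 1) := by positivity
        have := dIdx_ge μ hμ (n+1)
        push_cast at this
        linarith
      exact mul_pos h1 (dFact_pos μ hμ n)

lemma factorial_le_dFact (μ : ℝ) (hμ : 0 ≤ μ) : ∀ n, (n ! : ℝ) ≤ dFact μ n
  | 0 => by simp [dFact]
  | n + 1 => by
      have ih := factorial_le_dFact μ hμ n
      have h1 := dIdx_ge μ hμ (n+1)
      have hf : (0:ℝ) ≤ (n ! : ℝ) := by positivity
      calc ((n+1)! : ℝ) = ((n:ℝ)+1) * (n ! : ℝ) := by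
            rw [Nat.factorial_succ]; push_cast; ring
        _ ≤ dIdx μ (n+1) * dFact μ n := by
            apply mul_le_mul _ ih hf (le_trans (by positivity) h1)
            · push_cast at h1 ⊢; linarith
        _ = dFact μ (n+1) := rfl

/-- The general term of `Jmu`. -/
noncomputable def aTerm (μ x : ℝ) (n k : ℕ) : ℝ :=
  (-1 : ℝ) ^ k * (Nat.factorial (2 * k + n)) /
      ((Nat.factorial k) * (Nat.factorial (k + n)) * dFact μ (2 * k + n)) *
    (x / 2) ^ (2 * k + n)

lemma Jmu_eq (μ : ℝ) (n : ℕ) (x : ℝ) : Jmu μ n x = ∑' k, aTerm μ x n k := rfl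

lemma aTerm_abs_le (μ x : ℝ) (hμ : 0 ≤ μ) (n k : ℕ) :
    |aTerm μ x n k| ≤ |x/2| ^ (2*k+n) / ((k ! : ℝ) * ((k+n)! : ℝ)) := by
  have hD := dFact_pos μ hμ (2*k+n)
  have hle := factorial_le_dFact μ hμ (2*k+n)
  have hk : (0:ℝ) < (k ! : ℝ) := by exact_mod_cast Nat.factorial_pos k
  have hkn : (0:ℝ) < ((k+n)! : ℝ) := by exact_mod_cast Nat.factorial_pos (k+n)
  have h1 : |aTerm μ x n k|
      = ((2*k+n)! : ℝ) / ((k ! : ℝ) * ((k+n)! : ℝ) * dFact μ (2*k+n)) * |x/2| ^ (2*k+n) := by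
    unfold aTerm
    rw [abs_mul, abs_div, abs_mul, abs_pow, abs_neg, abs_one, one_pow, one_mul, abs_pow]
    congr 2
    · exact abs_of_nonneg (by positivity)
    · exact abs_of_pos (by positivity)
  rw [h1]
  have h2 : ((2*k+n)! : ℝ) / ((k ! : ℝ) * ((k+n)! : ℝ) * dFact μ (2*k+n))
      ≤ 1 / ((k ! : ℝ) * ((k+n)! : ℝ)) := by
    rw [div_le_div_iff₀ (by positivity) (by positivity)]
    calc ((2*k+n)! : ℝ) * ((k ! : ℝ) * ((k+n)! : ℝ))
        ≤ dFact μ (2*k+n) * ((k ! : ℝ) * ((k+n)! : ℝ)) := by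
          apply mul_le_mul_of_nonneg_right hle (by positivity)
      _ ≤ 1 * ((k ! : ℝ) * ((k+n)! : ℝ) * dFact μ (2*k+n)) := by nlinarith
  calc ((2*k+n)! : ℝ) / ((k ! : ℝ) * ((k+n)! : ℝ) * dFact μ (2*k+n)) * |x/2| ^ (2*k+n)
      ≤ 1 / ((k ! : ℝ) * ((k+n)! : ℝ)) * |x/2| ^ (2*k+n) := by
        apply mul_le_mul_of_nonneg_right h2 (by positivity)
    _ = |x/2| ^ (2*k+n) / ((k ! : ℝ) * ((k+n)! : ℝ)) := by ring

lemma summable_abs_aTerm (μ x : ℝ) (hμ : 0 ≤ μ) (n : ℕ) :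
    Summable (fun k => |aTerm μ x n k|) := by
  refine Summable.of_nonneg_of_le (fun k => abs_nonneg _) (fun k => ?_)
    ((Real.summable_pow_div_factorial ((x/2)^2)).mul_left (|x/2|^n))
  have h2 : (1:ℝ) ≤ ((k+n)! : ℝ) := Nat.one_le_cast.mpr (Nat.factorial_pos _)
  have hk : (0:ℝ) < (k ! : ℝ) := by exact_mod_cast Nat.factorial_pos k
  have e1 : |x/2| ^ (2*k+n) = |x/2|^n * ((x/2)^2)^k := by
    rw [pow_add, pow_mul, sq_abs, mul_comm]
  calc |aTerm μ x n k| ≤ |x/2| ^ (2*k+n) / ((k ! : ℝ) * ((k+n)! : ℝ)) :=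
        aTerm_abs_le μ x hμ n k
    _ ≤ |x/2| ^ (2*k+n) / ((k ! : ℝ) * 1) := by gcongr
    _ = |x/2|^n * (((x/2)^2)^k / (k ! : ℝ)) := by rw [mul_one, e1]; ring

lemma summable_aTerm (μ x : ℝ) (hμ : 0 ≤ μ) (n : ℕ) :
    Summable (fun k => aTerm μ x n k) :=
  (summable_abs_aTerm μ x hμ n).of_abs

noncomputable def Econst (x : ℝ) : ℝ := ∑' k : ℕ, ((x/2)^2)^k / (k ! : ℝ)

lemma Jmu_abs_le (μ x : ℝ) (hμ : 0 ≤ μ) (n : ℕ) :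
    |Jmu μ n x| ≤ Econst x * (|x/2|^n / (n ! : ℝ)) := by
  rw [Jmu_eq]
  have hb : ∀ k : ℕ, |aTerm μ x n k| ≤ (|x/2|^n / (n ! : ℝ)) * (((x/2)^2)^k / (k ! : ℝ)) := by
    intro k
    have h2 : ((n:ℕ)! : ℝ) ≤ ((k+n)! : ℝ) := by
      exact_mod_cast Nat.factorial_le (Nat.le_add_left n k)
    have hn : (0:ℝ) < ((n:ℕ)! : ℝ) := by exact_mod_cast Nat.factorial_pos n
    have hk : (0:ℝ) < (k ! : ℝ) := by exact_mod_cast Nat.factorial_pos k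
    have e1 : |x/2| ^ (2*k+n) = |x/2|^n * ((x/2)^2)^k := by
      rw [pow_add, pow_mul, sq_abs, mul_comm]
    calc |aTerm μ x n k| ≤ |x/2| ^ (2*k+n) / ((k ! : ℝ) * ((k+n)! : ℝ)) :=
          aTerm_abs_le μ x hμ n k
      _ ≤ |x/2| ^ (2*k+n) / ((k ! : ℝ) * ((n:ℕ)! : ℝ)) := by gcongr
      _ = (|x/2|^n / (n ! : ℝ)) * (((x/2)^2)^k / (k ! : ℝ)) := by rw [e1]; ring
  have hsb : Summable (fun k : ℕ => (|x/2|^n / (n ! : ℝ)) * (((x/2)^2)^k / (k ! : ℝ))) :=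
    (Real.summable_pow_div_factorial ((x/2)^2)).mul_left _
  calc |∑' k, aTerm μ x n k| ≤ ∑' k, |aTerm μ x n k| := by
        simpa using norm_tsum_le_tsum_norm (f := fun k => aTerm μ x n k)
          (by simpa [Real.norm_eq_abs] using summable_abs_aTerm μ x hμ n)
    _ ≤ ∑' k, (|x/2|^n / (n ! : ℝ)) * (((x/2)^2)^k / (k ! : ℝ)) :=
        Summable.tsum_le_tsum hb (summable_abs_aTerm μ x hμ n) hsb
    _ = (|x/2|^n / (n ! : ℝ)) * ∑' k, ((x/2)^2)^k / (k ! : ℝ) := tsum_mul_left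
    _ = Econst x * (|x/2|^n / (n ! : ℝ)) := by rw [Econst]; ring

noncomputable def wfn : ℕ → ℝ := fun n => if n = 0 then 1 else 2

lemma Lsum_eq (m : ℕ) :
    (∑ i ∈ Finset.range (m+1), wfn i * (-1:ℝ)^(m-i) * ((2*m).choose (m+i) : ℝ))
      = if m = 0 then 1 else 0 := by
  have hT : (∑ i ∈ Finset.range (2*m+1), (-1:ℝ)^i * ((2*m).choose i : ℝ))
      = if m = 0 then 1 else 0 := by
    have h := Int.alternating_sum_range_choose (n := 2*m)
    rcases Nat.eq_zero_or_pos m with hm | hm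
    · subst hm; simp [wfn]
    · rw [if_neg hm.ne']
      rw [if_neg (by omega : ¬ 2*m = 0)] at h
      exact_mod_cast congrArg (fun z : ℤ => (z:ℝ)) h
  set G : ℕ → ℝ := fun j => (-1:ℝ)^(m+j) * ((2*m).choose (m+j) : ℝ) with hG
  have hsplit : (∑ i ∈ Finset.range (2*m+1), (-1:ℝ)^i * ((2*m).choose i : ℝ))
      = (∑ i ∈ Finset.range m, (-1:ℝ)^i * ((2*m).choose i : ℝ))
        + ∑ j ∈ Finset.range (m+1), G j := by
    have h2 : 2*m+1 = m + (m+1) := by ring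
    rw [h2, Finset.sum_range_add]
  have hA : (∑ i ∈ Finset.range m, (-1:ℝ)^i * ((2*m).choose i : ℝ))
      = ∑ j ∈ Finset.range m, G (j+1) := by
    rw [← Finset.sum_range_reflect]
    apply Finset.sum_congr rfl
    intro j hj
    rw [Finset.mem_range] at hj
    have h1 : (2*m).choose (m - 1 - j) = (2*m).choose (m + (j+1)) := by
      rw [← Nat.choose_symm (by omega : m + (j+1) ≤ 2*m)]
      congr 1; omega
    have h2 : (-1:ℝ)^(m-1-j) = (-1:ℝ)^(m+(j+1)) := by
      have e : m + (j+1) = (m-1-j) + 2*(j+1) := by omega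
      rw [e, pow_add, pow_mul]; norm_num
    simp only [hG]
    rw [← h1, ← h2]
  have hB : (∑ j ∈ Finset.range (m+1), G j) = G 0 + ∑ j ∈ Finset.range m, G (j+1) := by
    rw [Finset.sum_range_succ']; ring
  have hL : (∑ i ∈ Finset.range (m+1), wfn i * (-1:ℝ)^(m-i) * ((2*m).choose (m+i):ℝ))
      = G 0 + 2 * ∑ j ∈ Finset.range m, G (j+1) := by
    rw [Finset.sum_range_succ']
    have h0 : wfn 0 * (-1:ℝ)^(m-0) * ((2*m).choose (m+0):ℝ) = G 0 := by
      simp [wfn, hG]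
    have hterm : ∀ j ∈ Finset.range m,
        wfn (j+1) * (-1:ℝ)^(m-(j+1)) * ((2*m).choose (m+(j+1)):ℝ) = 2 * G (j+1) := by
      intro j hj
      rw [Finset.mem_range] at hj
      have h2 : (-1:ℝ)^(m-(j+1)) = (-1:ℝ)^(m+(j+1)) := by
        have e : m + (j+1) = (m-(j+1)) + 2*(j+1) := by omega
        rw [e, pow_add, pow_mul]; norm_num
      simp only [wfn, hG, Nat.succ_ne_zero, if_false, h2]
      ring
    rw [Finset.sum_congr rfl hterm, h0, ← Finset.mul_sum]
    ring
  have := hT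
  rw [hsplit, hA, hB] at this
  rw [hL, ← this]
  ring

noncomputable def gTerm (μ x : ℝ) (p : ℕ × ℕ) : ℝ := wfn p.1 * aTerm μ x (2 * p.1) p.2

lemma summable_gTerm (μ x : ℝ) (hμ : 0 ≤ μ) : Summable (gTerm μ x) := by
  have hB : Summable (fun p : ℕ × ℕ =>
      (2 * (((x/2)^2)^p.1 / (p.1 ! : ℝ))) * (((x/2)^2)^p.2 / (p.2 ! : ℝ))) := by
    apply Summable.mul_of_nonneg
      ((Real.summable_pow_div_factorial ((x/2)^2)).mul_left 2)
      (Real.summable_pow_div_factorial ((x/2)^2))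
    · intro n; positivity
    · intro n; positivity
  apply Summable.of_norm_bounded hB
  rintro ⟨n, k⟩
  have hw : |wfn n| ≤ 2 := by
    unfold wfn; split <;> norm_num
  have hn : (0:ℝ) < ((n:ℕ)! : ℝ) := by exact_mod_cast Nat.factorial_pos n
  have hk : (0:ℝ) < (k ! : ℝ) := by exact_mod_cast Nat.factorial_pos k
  have h2 : ((n:ℕ)! : ℝ) ≤ ((k+2*n)! : ℝ) := by
    exact_mod_cast Nat.factorial_le (by omega)
  have e1 : |x/2| ^ (2*k+2*n) = ((x/2)^2)^n * ((x/2)^2)^k := by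
    have e : 2*k+2*n = 2*n + 2*k := by omega
    rw [e, pow_add, pow_mul, pow_mul, sq_abs]
  calc ‖gTerm μ x (n, k)‖ = |wfn n| * |aTerm μ x (2*n) k| := by
        rw [gTerm, Real.norm_eq_abs, abs_mul]
    _ ≤ 2 * (|x/2| ^ (2*k+2*n) / ((k ! : ℝ) * ((k+2*n)! : ℝ))) := by
        apply mul_le_mul hw (aTerm_abs_le μ x hμ (2*n) k) (abs_nonneg _) (by norm_num)
    _ ≤ 2 * (|x/2| ^ (2*k+2*n) / ((k ! : ℝ) * ((n:ℕ)! : ℝ))) := by gcongr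
    _ = (2 * (((x/2)^2)^n / ((n:ℕ)! : ℝ))) * (((x/2)^2)^k / (k ! : ℝ)) := by
        rw [e1]; ring

lemma diag_eq (μ x : ℝ) (hμ : 0 ≤ μ) (m : ℕ) :
    (∑ p ∈ Finset.HasAntidiagonal.antidiagonal m, gTerm μ x p) = if m = 0 then 1 else 0 := by
  rw [Finset.Nat.sum_antidiagonal_eq_sum_range_succ_mk]
  have hD := dFact_pos μ hμ (2*m)
  have hterm : ∀ i ∈ Finset.range (m+1),
      gTerm μ x (i, m - i)
        = (wfn i * (-1:ℝ)^(m-i) * ((2*m).choose (m+i):ℝ)) * ((x/2)^(2*m) / dFact μ (2*m)) := by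
    intro i hi
    rw [Finset.mem_range] at hi
    have him : i ≤ m := by omega
    have e1 : 2 * (m - i) + 2 * i = 2 * m := by omega
    have e2 : (m - i) + 2 * i = m + i := by omega
    have hch : ((2*m).choose (m+i) : ℝ) * ((m+i)! : ℝ) * ((m-i)! : ℝ) = ((2*m)! : ℝ) := by
      have h3 := Nat.choose_mul_factorial_mul_factorial (by omega : m + i ≤ 2*m)
      have h4 : 2*m - (m+i) = m - i := by omega
      rw [h4] at h3
      exact_mod_cast congrArg (fun z : ℕ => (z:ℝ)) h3
    have hfa : (0:ℝ) < ((m-i)! : ℝ) := by exact_mod_cast Nat.factorial_pos (m-i)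
    have hfb : (0:ℝ) < ((m+i)! : ℝ) := by exact_mod_cast Nat.factorial_pos (m+i)
    unfold gTerm aTerm
    simp only [e1, e2]
    have hDne : dFact μ (2*m) ≠ 0 := ne_of_gt hD
    field_simp
    linear_combination (-(wfn i * x^(m*2) * (1/2:ℝ)^(m*2))) * hch
  rw [Finset.sum_congr rfl hterm, ← Finset.sum_mul, Lsum_eq]
  rcases Nat.eq_zero_or_pos m with hm | hm
  · subst hm; simp [dFact]
  · rw [if_neg hm.ne', zero_mul]

lemma tsum_gTerm (μ x : ℝ) (hμ : 0 ≤ μ) : ∑' p : ℕ × ℕ, gTerm μ x p = 1 := by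
  have hsum := summable_gTerm μ x hμ
  have h1 : ∑' p : ℕ × ℕ, gTerm μ x p
      = ∑' σ : (Σ m : ℕ, (Finset.HasAntidiagonal.antidiagonal m : Finset (ℕ×ℕ))),
          gTerm μ x (Finset.HasAntidiagonal.sigmaAntidiagonalEquivProd σ) :=
    (Equiv.tsum_eq _ _).symm
  have hs2 : Summable (fun σ : (Σ m : ℕ, (Finset.HasAntidiagonal.antidiagonal m : Finset (ℕ×ℕ))) =>
      gTerm μ x (Finset.HasAntidiagonal.sigmaAntidiagonalEquivProd σ)) :=
    (Equiv.summable_iff _).2 hsum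
  rw [h1, Summable.tsum_sigma hs2]
  have h2 : ∀ m : ℕ, ∑' (c : (Finset.HasAntidiagonal.antidiagonal m : Finset (ℕ×ℕ))),
      gTerm μ x (Finset.HasAntidiagonal.sigmaAntidiagonalEquivProd ⟨m, c⟩)
        = (if m = 0 then (1:ℝ) else 0) := by
    intro m
    have h3 : ∀ c : (Finset.HasAntidiagonal.antidiagonal m : Finset (ℕ×ℕ)),
        gTerm μ x (Finset.HasAntidiagonal.sigmaAntidiagonalEquivProd ⟨m, c⟩) = gTerm μ x (c : ℕ × ℕ) := by
      intro c; rfl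
    rw [tsum_congr h3]
    exact (Finset.tsum_subtype _ (gTerm μ x)).trans (diag_eq μ x hμ m)
  rw [tsum_congr h2, tsum_eq_single 0 (fun m hm => if_neg hm)]
  simp

lemma hasSum_wfn (μ x : ℝ) (hμ : 0 ≤ μ) :
    HasSum (fun n : ℕ => wfn n * Jmu μ (2*n) x) 1 := by
  have hsum := summable_gTerm μ x hμ
  have h1 : HasSum (gTerm μ x) 1 := by
    have h := hsum.hasSum; rwa [tsum_gTerm μ x hμ] at h
  refine h1.prod_fiberwise fun n => ?_
  have h : (fun k => gTerm μ x (n, k)) = fun k => wfn n * aTerm μ x (2*n) k := rfl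
  rw [h, Jmu_eq]
  exact (summable_aTerm μ x hμ (2*n)).hasSum.mul_left _

lemma key2 (μ x : ℝ) (hμ : 0 ≤ μ) :
    Jmu μ 0 x + 2 * ∑' n : ℕ, Jmu μ (2*(n+1)) x = 1 := by
  have h2 := hasSum_wfn μ x hμ
  have h3 := h2.tsum_eq
  rw [Summable.tsum_eq_zero_add h2.summable] at h3
  have h4 : (fun n : ℕ => wfn (n+1) * Jmu μ (2*(n+1)) x)
      = fun n => 2 * Jmu μ (2*(n+1)) x := by
    funext n; simp [wfn]
  rw [h4, tsum_mul_left] at h3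
  simpa [wfn] using h3

lemma Econst_nonneg (x : ℝ) : 0 ≤ Econst x :=
  tsum_nonneg fun k => by positivity

lemma JmuZ_ofNat (μ x : ℝ) (n : ℕ) : JmuZ μ (n : ℤ) x = Jmu μ n x := by
  simp [JmuZ]

lemma JmuZ_neg (μ x : ℝ) (n : ℕ) :
    JmuZ μ (-((n:ℤ)+1)) x = (-1:ℝ)^(n+1) * Jmu μ (n+1) x := by
  rw [JmuZ, if_neg (by omega)]
  norm_num

/-- `Σ_{n ∈ ℤ} J_n^μ(x) = 1`, equivalently `J_0^μ(x) + 2 Σ_{n≥1} J_{2n}^μ(x) = 1`. -/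
theorem Jmu_sum_one (μ : ℝ) (hμ : 0 ≤ μ) (x : ℝ) :
    (∑' n : ℤ, JmuZ μ n x) = 1 ∧
      Jmu μ 0 x + 2 * ∑' n : ℕ, Jmu μ (2 * (n + 1)) x = 1 := by
  have hk2 := key2 μ x hμ
  refine ⟨?_, hk2⟩
  -- summability facts
  have hbsum : Summable (fun n : ℕ => Econst x * (|x/2|^n / (n ! : ℝ))) :=
    (Real.summable_pow_div_factorial (|x/2|)).mul_left _
  have hA : Summable (fun n : ℕ => Jmu μ n x) := by
    refine Summable.of_norm_bounded hbsum fun n => ?_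
    simpa [Real.norm_eq_abs] using Jmu_abs_le μ x hμ n
  have hA' : Summable (fun n : ℕ => Jmu μ (n+1) x) := (summable_nat_add_iff 1).2 hA
  have hneg : Summable (fun n : ℕ => (-1:ℝ)^(n+1) * Jmu μ (n+1) x) := by
    refine Summable.of_norm_bounded (g := fun n => Econst x * (|x/2|^(n+1) / ((n+1)! : ℝ)))
      ((summable_nat_add_iff 1).2 hbsum) fun n => ?_
    rw [norm_mul, norm_pow, norm_neg, norm_one, one_pow, one_mul]
    simpa [Real.norm_eq_abs] using Jmu_abs_le μ x hμ (n+1)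
  -- split the ℤ-sum
  have hZ : ∑' n : ℤ, JmuZ μ n x
      = (∑' n : ℕ, JmuZ μ (n:ℤ) x) + ∑' n : ℕ, JmuZ μ (-((n:ℤ)+1)) x := by
    refine tsum_of_nat_of_neg_add_one ?_ ?_
    · exact hA.congr fun n => (JmuZ_ofNat μ x n).symm
    · exact hneg.congr fun n => (JmuZ_neg μ x n).symm
  rw [hZ, tsum_congr (JmuZ_ofNat μ x), tsum_congr (JmuZ_neg μ x)]
  rw [Summable.tsum_eq_zero_add hA]
  -- combine the two shifted sums
  set s : ℕ → ℝ := fun n => Jmu μ (n+1) x + (-1:ℝ)^(n+1) * Jmu μ (n+1) x with hs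
  have hsum_s : (∑' n : ℕ, Jmu μ (n+1) x) + (∑' n : ℕ, (-1:ℝ)^(n+1) * Jmu μ (n+1) x)
      = ∑' n, s n := (Summable.tsum_add hA' hneg).symm
  have hs_even : ∀ k : ℕ, s (2*k) = 0 := by
    intro k
    have : ((-1:ℝ))^(2*k+1) = -1 := Odd.neg_one_pow ⟨k, by ring⟩
    simp only [hs, this]; ring
  have hs_odd : ∀ k : ℕ, s (2*k+1) = wfn (k+1) * Jmu μ (2*(k+1)) x := by
    intro k
    have h1 : ((-1:ℝ))^(2*k+1+1) = 1 := Even.neg_one_pow ⟨k+1, by ring⟩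
    have h2 : 2*k+1+1 = 2*(k+1) := by ring
    simp only [hs]
    rw [h1, one_mul, h2]
    have h3 : wfn (k+1) = 2 := by simp [wfn]
    rw [h3]
    ring
  have he : Summable (fun k => s (2*k)) :=
    summable_zero.congr fun k => (hs_even k).symm
  have ho : Summable (fun k => s (2*k+1)) := by
    refine (((summable_nat_add_iff 1).2 (hasSum_wfn μ x hμ).summable).congr ?_)
    exact fun k => (hs_odd k).symm
  have hsplit := tsum_even_add_odd he ho
  have hzero : (∑' k, s (2*k)) = 0 := by
    rw [tsum_congr hs_even]; exact tsum_zero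
  have hodd : (∑' k, s (2*k+1)) = 2 * ∑' n : ℕ, Jmu μ (2 * (n + 1)) x := by
    rw [tsum_congr hs_odd]
    have h4 : (fun k : ℕ => wfn (k+1) * Jmu μ (2*(k+1)) x)
        = fun k => 2 * Jmu μ (2*(k+1)) x := by
      funext k; simp [wfn]
    rw [h4, tsum_mul_left]
  have : (∑' n : ℕ, Jmu μ (n+1) x) + (∑' n : ℕ, (-1:ℝ)^(n+1) * Jmu μ (n+1) x)
      = 2 * ∑' n : ℕ, Jmu μ (2 * (n + 1)) x := by
    rw [hsum_s, ← hsplit, hzero, hodd, zero_add]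
  linarith [hk2]
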